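/- Let G be a regular distribution function and H a distribution function that is regular and strictly tail-equivalent to G. Then sup_{x ∈ ℝ} |G(x)^n − H(x)^n| → 0 as n → ∞. -/

import Mathlib

open Filter Topology Classical

/-- A distribution function: nondecreasing, right-continuous, limits 0 and 1. -/
def IsDistFun (G : ℝ → ℝ) : Prop :=
  Monotone G ∧ (∀ x, ContinuousWithinAt G (Set.Ici x) x) ∧
    Tendsto G atBot (𝓝 0) ∧ Tendsto G atTop (𝓝 1)

/-- The filter of approach to the right endpoint `G_* = sup {x : G x < 1}` from the left
(`atTop` if the endpoint is `+∞`). -/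
noncomputable def endFilter (G : ℝ → ℝ) : Filter ℝ :=
  if BddAbove {x | G x < 1} then 𝓝[<] (sSup {x | G x < 1}) else atTop

/-- Regularity in the sense of O'Brien: `G(G_*−) = 1` and `(1−G(x−))/(1−G(x)) → 1`
as `x → G_*−`. -/
def RegularDF (G : ℝ → ℝ) : Prop :=
  Tendsto G (endFilter G) (𝓝 1) ∧
  Tendsto (fun x => (1 - Function.leftLim G x) / (1 - G x)) (endFilter G) (𝓝 1)

/-- Strict tail-equivalence: same right endpoint and `(1−H(x))/(1−G(x)) → 1` at the endpoint. -/
def StrictTailEquiv (G H : ℝ → ℝ) : Prop :=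
  (BddAbove {x | G x < 1} ↔ BddAbove {x | H x < 1}) ∧
  sSup {x | G x < 1} = sSup {x | H x < 1} ∧
  Tendsto (fun x => (1 - H x) / (1 - G x)) (endFilter G) (𝓝 1)

lemma aux_A (t : ℝ) (ht0 : 0 ≤ t) (ht1 : t ≤ 1) (m : ℕ) :
    ((m : ℝ) + 1) * t ^ m * (1 - t) ≤ 1 - t ^ (m + 1) := by
  induction m with
  | zero => simp
  | succ m ih =>
    have h1 : t ^ (m + 1) ≤ t ^ m := pow_le_pow_of_le_one ht0 ht1 (by omega)
    rw [pow_succ t (m+1), pow_succ t m] at *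
    push_cast
    have hu0 : 0 ≤ t ^ m := pow_nonneg ht0 m
    have hm0 : (0:ℝ) ≤ (m:ℝ) := Nat.cast_nonneg m
    nlinarith [mul_nonneg hu0 ht0, mul_nonneg (mul_nonneg hu0 ht0) ht0,
      mul_nonneg hm0 (mul_nonneg hu0 (sub_nonneg.2 ht1))]

lemma aux_B (t : ℝ) (ht0 : 0 ≤ t) (ht1 : t ≤ 1) (n : ℕ) :
    (n : ℝ) * t ^ (n - 1) * (1 - t) ≤ 1 := by
  cases n with
  | zero => simp
  | succ m =>
    have := aux_A t ht0 ht1 m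
    have h2 : (0:ℝ) ≤ t ^ (m+1) := pow_nonneg ht0 _
    simpa using this.trans (by linarith)

lemma aux_C (a b : ℝ) (hb0 : 0 ≤ b) (hba : b ≤ a) (m : ℕ) :
    a ^ (m + 1) - b ^ (m + 1) ≤ ((m : ℝ) + 1) * a ^ m * (a - b) := by
  have ha0 : 0 ≤ a := hb0.trans hba
  induction m with
  | zero => simp
  | succ m ih =>
    have hpow : b ^ (m + 1) ≤ a ^ (m + 1) := pow_le_pow_left₀ hb0 hba _
    have hA : 0 ≤ a ^ m := pow_nonneg ha0 m
    have hA1 : 0 ≤ a ^ (m+1) := pow_nonneg ha0 _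
    rw [pow_succ a (m+1), pow_succ b (m+1), pow_succ a m] at *
    push_cast
    nlinarith [Nat.cast_nonneg (α := ℝ) m]

lemma aux_pt (a b δ : ℝ) (ha0 : 0 ≤ a) (ha1 : a ≤ 1) (hb0 : 0 ≤ b) (hb1 : b ≤ 1)
    (hδ0 : 0 ≤ δ) (hδ2 : δ ≤ 1/2) (hab : |a - b| ≤ δ * (1 - a)) (n : ℕ) :
    |a ^ n - b ^ n| ≤ 2 * δ := by
  cases n with
  | zero => simpa using hδ0
  | succ m =>
    rcases le_total b a with hba | hab'
    · have h1 : b ^ (m+1) ≤ a ^ (m+1) := pow_le_pow_left₀ hb0 hba _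
      rw [abs_of_nonneg (by linarith)]
      have h2 := aux_C a b hb0 hba m
      have h3 : a - b ≤ δ * (1 - a) := (le_abs_self _).trans hab
      have h4 : ((m:ℝ)+1) * a ^ m * (a - b) ≤ δ * (((m:ℝ)+1) * a ^ m * (1 - a)) := by
        have : (0:ℝ) ≤ ((m:ℝ)+1) * a ^ m :=
          mul_nonneg (by positivity) (pow_nonneg ha0 m)
        nlinarith
      have h5 : ((m:ℝ)+1) * a ^ m * (1 - a) ≤ 1 := by
        have := aux_B a ha0 ha1 (m+1); simpa using this
      nlinarith
    · have h1 : a ^ (m+1) ≤ b ^ (m+1) := pow_le_pow_left₀ ha0 hab' _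
      rw [abs_of_nonpos (by linarith), neg_sub]
      have h2 := aux_C b a ha0 hab' m
      have h3 : b - a ≤ δ * (1 - a) := by
        have := (le_abs_self (b - a)).trans (abs_sub_comm b a ▸ hab); linarith
      have h1a : 1 - a ≤ 2 * (1 - b) := by nlinarith
      have h4 : ((m:ℝ)+1) * b ^ m * (b - a) ≤ 2 * δ * (((m:ℝ)+1) * b ^ m * (1 - b)) := by
        have hmb : (0:ℝ) ≤ ((m:ℝ)+1) * b ^ m :=
          mul_nonneg (by positivity) (pow_nonneg hb0 m)
        nlinarith
      have h5 : ((m:ℝ)+1) * b ^ m * (1 - b) ≤ 1 := by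
        have := aux_B b hb0 hb1 (m+1); simpa using this
      nlinarith

theorem stmt2 (G H : ℝ → ℝ) (hG : IsDistFun G) (hGreg : RegularDF G)
    (hH : IsDistFun H) (hHreg : RegularDF H) (hte : StrictTailEquiv G H) :
    Tendsto (fun n : ℕ => ⨆ x : ℝ, |G x ^ n - H x ^ n|) atTop (𝓝 0) := by
  obtain ⟨hGmono, hGrc, hGbot, hGtop⟩ := hG
  obtain ⟨hHmono, hHrc, hHbot, hHtop⟩ := hH
  have hG0 : ∀ x, 0 ≤ G x := fun x =>
    le_of_tendsto hGbot (eventually_atBot.2 ⟨x, fun y hy => hGmono hy⟩)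
  have hG1 : ∀ x, G x ≤ 1 := fun x =>
    ge_of_tendsto hGtop (eventually_atTop.2 ⟨x, fun y hy => hGmono hy⟩)
  have hH0 : ∀ x, 0 ≤ H x := fun x =>
    le_of_tendsto hHbot (eventually_atBot.2 ⟨x, fun y hy => hHmono hy⟩)
  have hH1 : ∀ x, H x ≤ 1 := fun x =>
    ge_of_tendsto hHtop (eventually_atTop.2 ⟨x, fun y hy => hHmono hy⟩)
  have hbd : ∀ n : ℕ, BddAbove (Set.range fun x => |G x ^ n - H x ^ n|) := by
    intro n
    refine ⟨1, ?_⟩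
    rintro y ⟨x, rfl⟩
    have h1 : G x ^ n ≤ 1 := pow_le_one₀ (hG0 x) (hG1 x)
    have h2 : H x ^ n ≤ 1 := pow_le_one₀ (hH0 x) (hH1 x)
    have h3 : 0 ≤ G x ^ n := pow_nonneg (hG0 x) n
    have h4 : 0 ≤ H x ^ n := pow_nonneg (hH0 x) n
    rw [abs_le]; constructor <;> linarith
  have hnn : ∀ n : ℕ, 0 ≤ ⨆ x : ℝ, |G x ^ n - H x ^ n| := fun n =>
    le_ciSup_of_le (hbd n) 0 (abs_nonneg _)
  rw [NormedAddCommGroup.tendsto_nhds_zero]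
  intro ε hε
  set δ : ℝ := min (ε/4) (1/2) with hδdef
  have hδ0 : 0 < δ := lt_min (by linarith) (by norm_num)
  have hδ2 : δ ≤ 1/2 := min_le_right _ _
  have h2δ : 2 * δ ≤ ε/2 := by
    have := min_le_left (ε/4) (1/2); linarith
  -- ratio bound ⇒ pointwise bound
  have hpt : ∀ x, G x < 1 → |(1 - H x)/(1 - G x) - 1| ≤ δ →
      ∀ n : ℕ, |G x ^ n - H x ^ n| ≤ 2 * δ := by
    intro x hx h n
    have h1 : 0 < 1 - G x := by linarith
    have he : (1 - H x)/(1 - G x) - 1 = (G x - H x)/(1 - G x) := by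
      field_simp
      ring
    rw [he, abs_div, abs_of_pos h1, div_le_iff₀ h1] at h
    exact aux_pt _ _ _ (hG0 x) (hG1 x) (hH0 x) (hH1 x) hδ0.le hδ2 h n
  have hev : ∀ᶠ x in endFilter G, |(1 - H x)/(1 - G x) - 1| ≤ δ := by
    have := Metric.tendsto_nhds.1 hte.2.2 δ hδ0
    filter_upwards [this] with x hx
    rw [Real.dist_eq] at hx; exact hx.le
  obtain ⟨x₀, r, hr0, hr1, hbelow, habove⟩ :
      ∃ x₀ r : ℝ, 0 ≤ r ∧ r < 1 ∧ (∀ x ≤ x₀, G x ≤ r ∧ H x ≤ r) ∧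
        ∀ x, x₀ < x → ∀ n : ℕ, |G x ^ n - H x ^ n| ≤ 2 * δ := by
    by_cases hb : BddAbove {x | G x < 1}
    · -- bounded endpoint case
      set s := sSup {x | G x < 1} with hs
      have hSne : {x | G x < 1}.Nonempty :=
        (hGbot.eventually (gt_mem_nhds one_pos)).exists
      have hHb : BddAbove {x | H x < 1} := hte.1.mp hb
      have hsH : sSup {x | H x < 1} = s := hte.2.1.symm
      have hHSne : {x | H x < 1}.Nonempty :=
        (hHbot.eventually (gt_mem_nhds one_pos)).exists
      have hGlt : ∀ x, x < s → G x < 1 := by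
        intro x hx
        obtain ⟨y, hy, hxy⟩ := exists_lt_of_lt_csSup hSne hx
        exact lt_of_le_of_lt (hGmono hxy.le) hy
      have hHlt : ∀ x, x < s → H x < 1 := by
        intro x hx
        obtain ⟨y, hy, hxy⟩ := exists_lt_of_lt_csSup hHSne (hsH ▸ hx)
        exact lt_of_le_of_lt (hHmono hxy.le) hy
      have hGgt : ∀ x, s < x → G x = 1 := by
        intro x hx
        have h1 : ¬ (G x < 1) := fun h => absurd (le_csSup hb h) (not_le.2 hx)
        linarith [hG1 x, not_lt.1 h1]
      have hHgt : ∀ x, s < x → H x = 1 := by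
        intro x hx
        have h1 : ¬ (H x < 1) := fun h => absurd (le_csSup hHb h) (not_le.2 (hsH ▸ hx))
        linarith [hH1 x, not_lt.1 h1]
      have hGs : G s = 1 := by
        have h1 : Tendsto G (𝓝[>] s) (𝓝 (G s)) :=
          (hGrc s).mono_left (nhdsWithin_mono _ Set.Ioi_subset_Ici_self)
        have h2 : Tendsto G (𝓝[>] s) (𝓝 1) := by
          refine Tendsto.congr' ?_ tendsto_const_nhds
          filter_upwards [self_mem_nhdsWithin] with y hy
          exact (hGgt y hy).symm
        exact tendsto_nhds_unique h1 h2
      have hHs : H s = 1 := by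
        have h1 : Tendsto H (𝓝[>] s) (𝓝 (H s)) :=
          (hHrc s).mono_left (nhdsWithin_mono _ Set.Ioi_subset_Ici_self)
        have h2 : Tendsto H (𝓝[>] s) (𝓝 1) := by
          refine Tendsto.congr' ?_ tendsto_const_nhds
          filter_upwards [self_mem_nhdsWithin] with y hy
          exact (hHgt y hy).symm
        exact tendsto_nhds_unique h1 h2
      simp only [endFilter, if_pos hb] at hev
      obtain ⟨x₀, hx₀s, hsub⟩ := mem_nhdsLT_iff_exists_Ioo_subset.1 hev
      refine ⟨x₀, max (G x₀) (H x₀), (hG0 x₀).trans (le_max_left _ _),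
        max_lt (hGlt x₀ hx₀s) (hHlt x₀ hx₀s),
        fun x hx => ⟨(hGmono hx).trans (le_max_left _ _),
          (hHmono hx).trans (le_max_right _ _)⟩, ?_⟩
      intro x hx n
      rcases lt_trichotomy x s with hxs | rfl | hxs
      · exact hpt x (hGlt x hxs) (hsub ⟨hx, hxs⟩) n
      · rw [hGs, hHs]; simp; positivity
      · rw [hGgt x hxs, hHgt x hxs]; simp; positivity
    · -- unbounded endpoint case
      simp only [endFilter, if_neg hb] at hev
      have hGlt : ∀ x, G x < 1 := by
        intro x
        obtain ⟨y, hyS, hxy⟩ := (not_bddAbove_iff.1 hb) x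
        exact lt_of_le_of_lt (hGmono hxy.le) hyS
      have hHb : ¬ BddAbove {x | H x < 1} := fun h => hb (hte.1.mpr h)
      have hHlt : ∀ x, H x < 1 := by
        intro x
        obtain ⟨y, hyS, hxy⟩ := (not_bddAbove_iff.1 hHb) x
        exact lt_of_le_of_lt (hHmono hxy.le) hyS
      obtain ⟨x₀, hx₀⟩ := eventually_atTop.1 hev
      refine ⟨x₀, max (G x₀) (H x₀), (hG0 x₀).trans (le_max_left _ _),
        max_lt (hGlt x₀) (hHlt x₀),
        fun x hx => ⟨(hGmono hx).trans (le_max_left _ _),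
          (hHmono hx).trans (le_max_right _ _)⟩, ?_⟩
      intro x hx n
      exact hpt x (hGlt x) (hx₀ x hx.le) n
  have hrt : Tendsto (fun n : ℕ => r ^ n) atTop (𝓝 0) :=
    tendsto_pow_atTop_nhds_zero_of_lt_one hr0 hr1
  filter_upwards [hrt.eventually (gt_mem_nhds (show (0:ℝ) < ε/2 by linarith))] with n hn
  have hsup : (⨆ x : ℝ, |G x ^ n - H x ^ n|) ≤ ε/2 := by
    apply ciSup_le
    intro x
    rcases le_or_gt x x₀ with hx | hx
    · obtain ⟨hg, hh⟩ := hbelow x hx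
      have hgn : G x ^ n ≤ r ^ n := pow_le_pow_left₀ (hG0 x) hg n
      have hhn : H x ^ n ≤ r ^ n := pow_le_pow_left₀ (hH0 x) hh n
      have h3 : 0 ≤ G x ^ n := pow_nonneg (hG0 x) n
      have h4 : 0 ≤ H x ^ n := pow_nonneg (hH0 x) n
      rw [abs_le]; constructor <;> [linarith; linarith]
    · linarith [habove x hx n]
  rw [Real.norm_eq_abs, abs_of_nonneg (hnn n)]
  linarith
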